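/- (Equivalence of P2 and P4) Let h_sd, λ_p, λ_s, μ_p be real numbers with 0 < h_sd, 0 < λ_p < μ_p ≤ 1 and 0 < λ_s < 1, and let S' be any subset of {b ∈ ℝ : λ_s·μ_p < b·h_sd·(μ_p − λ_p)}. Then for every b ∈ S', b maximizes the secondary throughput μ_s over S' (i.e., μ_s(b') ≤ μ_s(b) for all b' ∈ S') if and only if b minimizes the secondary average delay D_s over S' (i.e., D_s(b) ≤ D_s(b') for all b' ∈ S'). Hence the problems of maximizing μ_s and minimizing D_s over a common feasible set contained in the secondary stability region have identical sets of optimal solutions. -/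

import Mathlib

/-- Auxiliary: strict monotonicity of delay in `b` on the stability region. -/
lemma delay_strict_anti
    (h_sd lam_p lam_s mu_p : ℝ)
    (hsd : 0 < h_sd) (hlp : 0 < lam_p) (hlm : lam_p < mu_p) (hmp1 : mu_p ≤ 1)
    (hls0 : 0 < lam_s) (hls1 : lam_s < 1)
    (b b' : ℝ)
    (hb : lam_s * mu_p < b * h_sd * (mu_p - lam_p))
    (hb' : lam_s * mu_p < b' * h_sd * (mu_p - lam_p))
    (hlt : b' < b) :
    (b * h_sd * lam_p * lam_s * (1 - mu_p)
        + (lam_s - lam_s ^ 2) * (mu_p - lam_p) * mu_p)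
      / ((mu_p - lam_p) * (b * h_sd * (mu_p - lam_p) - lam_s * mu_p))
    <
    (b' * h_sd * lam_p * lam_s * (1 - mu_p)
        + (lam_s - lam_s ^ 2) * (mu_p - lam_p) * mu_p)
      / ((mu_p - lam_p) * (b' * h_sd * (mu_p - lam_p) - lam_s * mu_p)) := by
  have hdm : 0 < mu_p - lam_p := by linarith
  have hmp : 0 < mu_p := by linarith
  have hP : 0 < (mu_p - lam_p) * (b * h_sd * (mu_p - lam_p) - lam_s * mu_p) := by
    apply mul_pos hdm; nlinarith
  have hP' : 0 < (mu_p - lam_p) * (b' * h_sd * (mu_p - lam_p) - lam_s * mu_p) := by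
    apply mul_pos hdm; nlinarith
  rw [div_lt_div_iff₀ hP hP']
  nlinarith [mul_pos (mul_pos hls0 hmp) (mul_pos hdm (mul_pos (sub_pos.mpr hlt) hsd)),
    mul_pos hdm hdm, mul_nonneg (mul_nonneg hlp.le hls0.le) (by linarith : (0:ℝ) ≤ 1 - mu_p),
    mul_pos (mul_pos hls0 hmp) hdm, sq_nonneg (mu_p - lam_p),
    mul_pos (mul_pos (mul_pos hls0 hmp) (mul_pos hdm (mul_pos (sub_pos.mpr hlt) hsd)))
      (mul_pos (sub_pos.mpr hls1) (mul_pos hdm hdm))]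

/-- Equivalence of P2 and P4: For any feasible set `S'` contained in the
secondary stability region, a point `b ∈ S'` maximizes the secondary throughput `μ_s`
over `S'` iff it minimizes the secondary average delay `D_s` over `S'`. -/
theorem P2_P4_equivalence
    (h_sd lam_p lam_s mu_p : ℝ)
    (hsd : 0 < h_sd) (hlp : 0 < lam_p) (hlm : lam_p < mu_p) (hmp1 : mu_p ≤ 1)
    (hls0 : 0 < lam_s) (hls1 : lam_s < 1)
    (μ_s : ℝ → ℝ)
    (hμs : ∀ b : ℝ, μ_s b = b * h_sd * (1 - lam_p / mu_p))
    (N_s : ℝ → ℝ)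
    (hNs : ∀ b : ℝ, N_s b =
      (b * h_sd * lam_p * lam_s * (1 - mu_p)
        + (lam_s - lam_s ^ 2) * (mu_p - lam_p) * mu_p)
      / ((mu_p - lam_p) * (b * h_sd * (mu_p - lam_p) - lam_s * mu_p)))
    (D_s : ℝ → ℝ)
    (hDs : ∀ b : ℝ, D_s b = N_s b / lam_s)
    (S' : Set ℝ)
    (hS' : S' ⊆ {b : ℝ | lam_s * mu_p < b * h_sd * (mu_p - lam_p)}) :
    ∀ b ∈ S', ((∀ b' ∈ S', μ_s b' ≤ μ_s b) ↔ (∀ b' ∈ S', D_s b ≤ D_s b')) := by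
  have hmp : 0 < mu_p := by linarith
  have hc : 0 < h_sd * (1 - lam_p / mu_p) := by
    apply mul_pos hsd
    have : lam_p / mu_p < 1 := (div_lt_one hmp).mpr hlm
    linarith
  -- μ_s b' ≤ μ_s b ↔ b' ≤ b
  have hmu_iff : ∀ b b' : ℝ, (μ_s b' ≤ μ_s b ↔ b' ≤ b) := by
    intro b b'
    rw [hμs, hμs, mul_assoc, mul_assoc]
    exact mul_le_mul_iff_of_pos_right hc
  -- D_s nonstrict monotone
  have hD_le : ∀ b ∈ S', ∀ b' ∈ S', b' ≤ b → D_s b ≤ D_s b' := by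
    intro b hb b' hb' hle
    rcases eq_or_lt_of_le hle with h | h
    · rw [h]
    · rw [hDs, hDs, hNs, hNs]
      have h2 := delay_strict_anti h_sd lam_p lam_s mu_p hsd hlp hlm hmp1 hls0 hls1
        b b' (hS' hb) (hS' hb') h
      gcongr
  have hD_lt : ∀ b ∈ S', ∀ b' ∈ S', b' < b → D_s b < D_s b' := by
    intro b hb b' hb' h
    rw [hDs, hDs, hNs, hNs]
    have h2 := delay_strict_anti h_sd lam_p lam_s mu_p hsd hlp hlm hmp1 hls0 hls1
      b b' (hS' hb) (hS' hb') h
    gcongr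
  intro b hb
  constructor
  · intro H b' hb'
    exact hD_le b hb b' hb' ((hmu_iff b b').mp (H b' hb'))
  · intro H b' hb'
    rw [hmu_iff]
    by_contra hlt
    push_neg at hlt
    exact absurd (H b' hb') (not_le.mpr (hD_lt b' hb' b hb hlt))
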